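/- Let F be a Schwartz function on ℍⁿ × ℝ and L a positive integer. There is a constant C, depending only on L, n and finitely many Schwartz seminorms of F, such that: (a) if |(z',u')| ≤ (1/(2γ))(1+|(z,u)|) then |F((z,u)∘(z',u')⁻¹, w) − F((z,u), w)| ≤ C |(z',u')| (1+|(z,u)|)^{−(L+2n+2)} (1+|w|)^{−(L+2)}; and (b) for all (z',u'), |F((z,u)∘(z',u')⁻¹, w) − F((z,u), w)| ≤ C [(1+|(z,u)∘(z',u')⁻¹|)^{−(L+2n+2)} + (1+|(z,u)|)^{−(L+2n+2)}] (1+|w|)^{−(L+1)}. -/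

import Mathlib

open MeasureTheory Complex SchwartzMap Filter
open scoped BigOperators ComplexConjugate FourierTransform ENNReal

noncomputable section

/-- The underlying space of the Heisenberg group ℍⁿ ≅ ℂⁿ × ℝ. -/
abbrev H (n : ℕ) := (Fin n → ℂ) × ℝ

/-- Heisenberg group multiplication: (z,t)∘(z',t') = (z+z', t+t'+2 Im(z·conj z')). -/
def Hmul {n : ℕ} (x y : H n) : H n :=
  (x.1 + y.1, x.2 + y.2 + 2 * (∑ j, x.1 j * conj (y.1 j)).im)

/-- Heisenberg group inverse: (z,t)⁻¹ = (-z,-t). -/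
def Hinv {n : ℕ} (x : H n) : H n := (-x.1, -x.2)

/-- Homogeneous norm |(z,t)| = (|z|² + |t|)^{1/2}. -/
def Hnorm {n : ℕ} (x : H n) : ℝ := Real.sqrt ((∑ j, Complex.normSq (x.1 j)) + |x.2|)

/-- Convolution on ℍⁿ : (f∗g)(x) = ∫ f(x∘y⁻¹) g(y) dy. -/
def Hconv {n : ℕ} (f g : H n → ℝ) (x : H n) : ℝ := ∫ y, f (Hmul x (Hinv y)) * g y

/-- Partial convolution in the central variable: (f ∗₂ h)(z,u) = ∫ f(z,u−v) h(v) dv. -/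
def conv2 {n : ℕ} (f : H n → ℝ) (h : ℝ → ℝ) (x : H n) : ℝ := ∫ v, f (x.1, x.2 - v) * h v

/-- Ordinary convolution on ℝ. -/
def convR (h k : ℝ → ℝ) (x : ℝ) : ℝ := ∫ v, h (x - v) * k v

/-- Convolution on the direct product group ℍⁿ × ℝ. -/
def PConv {n : ℕ} (F G : H n × ℝ → ℝ) (p : H n × ℝ) : ℝ :=
  ∫ q : H n × ℝ, F (Hmul p.1 (Hinv q.1), p.2 - q.2) * G q

/-- The projection π : (πF)(z,u) = ∫ F((z,u−v),v) dv. -/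
def piProj {n : ℕ} (F : H n × ℝ → ℝ) (x : H n) : ℝ := ∫ v, F ((x.1, x.2 - v), v)

/-- Nonisotropic dilation ψ_s(z,u) = s^{−2n−2} ψ(z/s, u/s²). -/
def dil1 {n : ℕ} (ψ : H n → ℝ) (s : ℝ) (x : H n) : ℝ :=
  (s ^ (2 * n + 2))⁻¹ * ψ ((s : ℂ)⁻¹ • x.1, x.2 / s ^ 2)

/-- Dilation on ℝ: η_t(v) = t⁻¹ η(v/t). -/
def dil2 (η : ℝ → ℝ) (t : ℝ) (v : ℝ) : ℝ := t⁻¹ * η (v / t)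

/-- All moments of a function on ℝ vanish. -/
def momentsVanishR (η : ℝ → ℝ) : Prop := ∀ γ : ℕ, ∫ v : ℝ, v ^ γ * η v = 0

/-- All moments of a function on ℍⁿ vanish. -/
def momentsVanishH {n : ℕ} (ψ : H n → ℝ) : Prop :=
  ∀ (α β : Fin n → ℕ) (γ : ℕ),
    ∫ x : H n, (∏ j, ((x.1 j).re ^ α j * (x.1 j).im ^ β j)) * x.2 ^ γ * ψ x = 0

/-- A function on ℍⁿ is radial in the ℂⁿ-variable. -/
def HRadial {n : ℕ} (ψ : H n → ℝ) : Prop :=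
  ∀ (z z' : Fin n → ℂ) (u : ℝ),
    (∑ j, Complex.normSq (z j)) = (∑ j, Complex.normSq (z' j)) → ψ (z, u) = ψ (z', u)

/-- The product moment conditions defining S_∞(ℍⁿ × ℝ). -/
def SInf {n : ℕ} (F : H n × ℝ → ℝ) : Prop :=
  (∀ (α β : Fin n → ℕ) (γ : ℕ) (v : ℝ),
    ∫ x : H n, (∏ j, ((x.1 j).re ^ α j * (x.1 j).im ^ β j)) * x.2 ^ γ * F (x, v) = 0) ∧
  (∀ (γ : ℕ) (x : H n), ∫ v : ℝ, v ^ γ * F (x, v) = 0)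

/-- The flag component function ψ_{s,t} = ψ^{(1)}_s ∗₂ ψ^{(2)}_t. -/
def psist {n : ℕ} (ψa : H n → ℝ) (ψb : ℝ → ℝ) (s t : ℝ) : H n → ℝ :=
  conv2 (dil1 ψa s) (dil2 ψb t)

/-- The product kernel Ψ_{s,t}((z,u),r) = ψ^{(1)}_s(z,u) ψ^{(2)}_t(r) on ℍⁿ × ℝ. -/
def PsiST {n : ℕ} (ψa : H n → ℝ) (ψb : ℝ → ℝ) (s t : ℝ) : H n × ℝ → ℝ :=
  fun p => dil1 ψa s p.1 * dil2 ψb t p.2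


section Aux
variable {n : ℕ}

lemma hnorm_nonneg (x : H n) : 0 ≤ Hnorm x := Real.sqrt_nonneg _

lemma sumSq_nonneg (x : H n) : 0 ≤ ∑ j, Complex.normSq (x.1 j) :=
  Finset.sum_nonneg fun _ _ => Complex.normSq_nonneg _

lemma hnorm_sq (x : H n) : Hnorm x ^ 2 = (∑ j, Complex.normSq (x.1 j)) + |x.2| :=
  Real.sq_sqrt (add_nonneg (sumSq_nonneg x) (abs_nonneg _))

lemma sqrt_sumSq_le (x : H n) : Real.sqrt (∑ j, Complex.normSq (x.1 j)) ≤ Hnorm x :=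
  Real.sqrt_le_sqrt (le_add_of_nonneg_right (abs_nonneg _))

lemma abs_snd_le_sq (x : H n) : |x.2| ≤ Hnorm x ^ 2 := by
  rw [hnorm_sq]; exact le_add_of_nonneg_left (sumSq_nonneg x)

lemma one_add_hnorm_le (x : H n) :
    1 + Hnorm x ≤ (Real.sqrt n + 2) * (1 + ‖x‖) := by
  have h1 : Hnorm x ≤ Real.sqrt (∑ j, Complex.normSq (x.1 j)) + Real.sqrt |x.2| := by
    have ha := sumSq_nonneg x
    have hb := abs_nonneg x.2
    have := Real.sq_sqrt ha
    have := Real.sq_sqrt hb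
    have h := Real.sqrt_le_sqrt (show (∑ j, Complex.normSq (x.1 j)) + |x.2|
        ≤ (Real.sqrt (∑ j, Complex.normSq (x.1 j)) + Real.sqrt |x.2|) ^ 2 by
      nlinarith [Real.sqrt_nonneg (∑ j, Complex.normSq (x.1 j)), Real.sqrt_nonneg |x.2|])
    rwa [Real.sqrt_sq (by positivity)] at h
  have h2 : Real.sqrt (∑ j, Complex.normSq (x.1 j)) ≤ Real.sqrt n * ‖x‖ := by
    have hsum : (∑ j, Complex.normSq (x.1 j)) ≤ (n : ℝ) * ‖x‖ ^ 2 := by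
      calc (∑ j, Complex.normSq (x.1 j)) ≤ ∑ _j : Fin n, ‖x‖ ^ 2 := by
            refine Finset.sum_le_sum fun j _ => ?_
            rw [← Complex.sq_norm]
            have : ‖x.1 j‖ ≤ ‖x‖ :=
              (norm_le_pi_norm x.1 j).trans (norm_fst_le x)
            exact pow_le_pow_left₀ (norm_nonneg _) this 2
        _ = (n : ℝ) * ‖x‖ ^ 2 := by simp [Finset.sum_const, mul_comm]
    calc Real.sqrt (∑ j, Complex.normSq (x.1 j)) ≤ Real.sqrt ((n : ℝ) * ‖x‖ ^ 2) :=
          Real.sqrt_le_sqrt hsum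
      _ = Real.sqrt n * ‖x‖ := by
          rw [Real.sqrt_mul (Nat.cast_nonneg n), Real.sqrt_sq (norm_nonneg x)]
  have h3 : Real.sqrt |x.2| ≤ 1 + ‖x‖ := by
    have : Real.sqrt |x.2| ≤ Real.sqrt ((1 + |x.2|) ^ 2) := by
      apply Real.sqrt_le_sqrt; nlinarith [abs_nonneg x.2]
    rw [Real.sqrt_sq (by positivity)] at this
    have h4 : |x.2| ≤ ‖x‖ := by
      simpa [Real.norm_eq_abs] using norm_snd_le x
    linarith
  have hn : (0:ℝ) ≤ Real.sqrt n := Real.sqrt_nonneg _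
  have hx : (0:ℝ) ≤ ‖x‖ := norm_nonneg _
  nlinarith

lemma hmul_hinv_cancel (x a : H n) : Hmul (Hmul x (Hinv a)) a = x := by
  unfold Hmul Hinv
  ext1
  · simp
  · have h1 : (∑ j, x.1 j * conj ((-a.1) j)) = -∑ j, x.1 j * conj (a.1 j) := by
      simp [mul_neg]
    have h2 : (∑ j, (x.1 + -a.1) j * conj (a.1 j))
        = (∑ j, x.1 j * conj (a.1 j)) - ∑ j, a.1 j * conj (a.1 j) := by
      simp [add_mul, neg_mul, Finset.sum_add_distrib, sub_eq_add_neg]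
    have h3 : (∑ j, a.1 j * conj (a.1 j)).im = 0 := by
      rw [Complex.im_sum]
      simp [Complex.mul_conj]
    simp only [h1, h2, Complex.neg_im, Complex.sub_im, h3]
    ring

end Aux
section Aux2
variable {n : ℕ}

lemma sum_abs_mul_le (x x' : H n) :
    (∑ j, ‖x.1 j‖ * ‖x'.1 j‖)
      ≤ Real.sqrt (∑ j, Complex.normSq (x.1 j)) * Real.sqrt (∑ j, Complex.normSq (x'.1 j)) := by
  have cs := Finset.sum_mul_sq_le_sq_mul_sq Finset.univ
    (fun j => ‖x.1 j‖) (fun j => ‖x'.1 j‖)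
  have hnn : (0:ℝ) ≤ ∑ j, ‖x.1 j‖ * ‖x'.1 j‖ :=
    Finset.sum_nonneg fun j _ => mul_nonneg (norm_nonneg _) (norm_nonneg _)
  have h := Real.sqrt_le_sqrt cs
  rw [Real.sqrt_sq hnn, Real.sqrt_mul (by positivity)] at h
  simpa [Complex.sq_norm] using h

lemma abs_im_sum_le (x x' : H n) :
    |(∑ j, x.1 j * conj (x'.1 j)).im| ≤ Hnorm x * Hnorm x' := by
  have h1 : |(∑ j, x.1 j * conj (x'.1 j)).im| ≤ ‖∑ j, x.1 j * conj (x'.1 j)‖ :=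
    Complex.abs_im_le_norm _
  have h2 : ‖∑ j, x.1 j * conj (x'.1 j)‖
      ≤ ∑ j, ‖x.1 j‖ * ‖x'.1 j‖ := by
    refine le_trans (norm_sum_le _ _) (le_of_eq ?_)
    refine Finset.sum_congr rfl fun j _ => ?_
    rw [norm_mul, Complex.norm_conj]
  have h3 := sum_abs_mul_le x x'
  have h4 := mul_le_mul (sqrt_sumSq_le x) (sqrt_sumSq_le x') (Real.sqrt_nonneg _) (hnorm_nonneg x)
  linarith

lemma hmul_hinv_sub (x x' : H n) :
    Hmul x (Hinv x') - x = (-x'.1, -x'.2 - 2 * (∑ j, x.1 j * conj (x'.1 j)).im) := by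
  unfold Hmul Hinv
  ext1
  · simp
  · have h1 : (∑ j, x.1 j * conj ((-x'.1) j)) = -∑ j, x.1 j * conj (x'.1 j) := by
      simp [mul_neg]
    simp only [Prod.snd_sub, h1, Complex.neg_im]
    ring

lemma pi_norm_le_hnorm (x' : H n) : ‖x'.1‖ ≤ Hnorm x' := by
  refine (pi_norm_le_iff_of_nonneg (hnorm_nonneg x')).2 fun j => ?_
  have h1 : ‖x'.1 j‖ ≤ Real.sqrt (∑ i, Complex.normSq (x'.1 i)) := by
    rw [Complex.norm_def]
    exact Real.sqrt_le_sqrt (Finset.single_le_sum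
      (fun i _ => Complex.normSq_nonneg _) (Finset.mem_univ j))
  exact h1.trans (sqrt_sumSq_le x')

lemma norm_diff_le (x x' : H n) (h : Hnorm x' ≤ 1 + Hnorm x) :
    ‖Hmul x (Hinv x') - x‖ ≤ 3 * Hnorm x' * (1 + Hnorm x) := by
  rw [hmul_hinv_sub, Prod.norm_def]
  have hN : 0 ≤ Hnorm x := hnorm_nonneg x
  have hN' : 0 ≤ Hnorm x' := hnorm_nonneg x'
  have hb1 : ‖-x'.1‖ ≤ 3 * Hnorm x' * (1 + Hnorm x) := by
    rw [norm_neg]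
    have := pi_norm_le_hnorm x'
    nlinarith
  have hb2 : ‖-x'.2 - 2 * (∑ j, x.1 j * conj (x'.1 j)).im‖ ≤ 3 * Hnorm x' * (1 + Hnorm x) := by
    rw [Real.norm_eq_abs]
    have h1 : |(-x'.2 - 2 * (∑ j, x.1 j * conj (x'.1 j)).im)|
        ≤ |x'.2| + 2 * |(∑ j, x.1 j * conj (x'.1 j)).im| := by
      calc _ ≤ |(-x'.2)| + |2 * (∑ j, x.1 j * conj (x'.1 j)).im| := abs_sub _ _
        _ = |x'.2| + 2 * |(∑ j, x.1 j * conj (x'.1 j)).im| := by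
            rw [abs_neg, abs_mul]; norm_num
    have h2 := abs_im_sum_le x x'
    have h3 := abs_snd_le_sq x'
    nlinarith
  exact max_le hb1 hb2

end Aux2
section Aux3
variable {n : ℕ}

lemma segment_pt (x x' : H n) (θ : ℝ) :
    x + θ • (Hmul x (Hinv x') - x) = Hmul x (Hinv ((θ • x'.1, θ * x'.2) : H n)) := by
  have hT : (∑ j, x.1 j * conj ((θ • x'.1) j))
      = (θ : ℂ) * ∑ j, x.1 j * conj (x'.1 j) := by
    rw [Finset.mul_sum]
    refine Finset.sum_congr rfl fun j _ => ?_
    simp only [Pi.smul_apply, Complex.real_smul, map_mul, Complex.conj_ofReal]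
    ring
  have goal' : θ • (Hmul x (Hinv x') - x)
      = Hmul x (Hinv ((θ • x'.1, θ * x'.2) : H n)) - x := by
    rw [hmul_hinv_sub, hmul_hinv_sub]
    ext1
    · simp [smul_neg]
    · simp only [Prod.smul_snd, smul_eq_mul, hT, Complex.mul_im, Complex.ofReal_re,
        Complex.ofReal_im]
      ring
  rw [goal']
  abel

lemma hnorm_smul_le (x' : H n) (θ : ℝ) (h0 : 0 ≤ θ) (h1 : θ ≤ 1) :
    Hnorm ((θ • x'.1, θ * x'.2) : H n) ≤ Hnorm x' := by
  unfold Hnorm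
  apply Real.sqrt_le_sqrt
  have hsum : (∑ j, Complex.normSq ((θ • x'.1) j))
      = θ ^ 2 * ∑ j, Complex.normSq (x'.1 j) := by
    rw [Finset.mul_sum]
    refine Finset.sum_congr rfl fun j _ => ?_
    simp only [Pi.smul_apply, Complex.real_smul, Complex.normSq_mul, Complex.normSq_ofReal]
    ring
  have habs : |θ * x'.2| = θ * |x'.2| := by
    rw [abs_mul, _root_.abs_of_nonneg h0]
  simp only [hsum, habs]
  have hS := sumSq_nonneg x'
  have ha := abs_nonneg x'.2
  have hθ2 : θ ^ 2 ≤ 1 := by nlinarith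
  nlinarith [mul_le_mul_of_nonneg_right hθ2 hS, mul_le_mul_of_nonneg_right h1 ha]

end Aux3
set_option maxHeartbeats 1000000 in
/-- single-difference estimates for a Schwartz function on ℍⁿ × ℝ. -/
theorem statement8 (n : ℕ) (F : SchwartzMap (H n × ℝ) ℝ) (L : ℕ) (hL : 0 < L)
    (γ : ℝ) (hγ : 1 < γ)
    (hγ' : ∀ x y : H n, Hnorm (Hmul x y) ≤ γ * (Hnorm x + Hnorm y)) :
    ∃ C > 0, ∀ (x x' : H n) (w : ℝ),
      (Hnorm x' ≤ 1 / (2 * γ) * (1 + Hnorm x) →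
        |F (Hmul x (Hinv x'), w) - F (x, w)|
          ≤ C * Hnorm x' / (1 + Hnorm x) ^ (L + 2 * n + 2) * (1 / (1 + |w|) ^ (L + 2))) ∧
      |F (Hmul x (Hinv x'), w) - F (x, w)|
        ≤ C * (1 / (1 + Hnorm (Hmul x (Hinv x'))) ^ (L + 2 * n + 2)
            + 1 / (1 + Hnorm x) ^ (L + 2 * n + 2)) * (1 / (1 + |w|) ^ (L + 1)) := by
  have hγ0 : (0:ℝ) < γ := lt_trans one_pos hγ
  set c : ℝ := Real.sqrt n + 2 with hc_def
  have hc1 : (1:ℝ) ≤ c := by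
    have := Real.sqrt_nonneg (n:ℝ); simp only [hc_def]; linarith
  have hc0 : (0:ℝ) < c := lt_of_lt_of_le one_pos hc1
  set g : ℝ := 2 * γ * c with hg_def
  have hg1 : (1:ℝ) ≤ g := by
    have : (2:ℝ) ≤ 2 * γ := by linarith
    nlinarith
  have hg0 : (0:ℝ) < g := lt_of_lt_of_le one_pos hg1
  set k : ℕ := 2 * L + 2 * n + 5 with hk_def
  set SB : ℝ := ((Finset.Iic ((k : ℕ), (1 : ℕ))).sup
    (fun m => SchwartzMap.seminorm ℝ m.1 m.2)) F with hSB_def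
  have hSB0 : 0 ≤ SB := apply_nonneg _ _
  set C : ℝ := 3 * 2 ^ k * g ^ k * (SB + 1) with hC_def
  have hC0 : 0 < C := by positivity
  -- basic decay estimates
  have hF0 : ∀ (p : H n × ℝ) (k' : ℕ), k' ≤ k → (1 + ‖p‖) ^ k' * |F p| ≤ 2 ^ k * SB := by
    intro p k' hk'
    have h := SchwartzMap.one_add_le_sup_seminorm_apply (𝕜 := ℝ) (m := (k, 1)) hk'
      (Nat.zero_le 1) F p
    simpa [norm_iteratedFDeriv_zero, Real.norm_eq_abs] using h
  have hF1 : ∀ p : H n × ℝ, (1 + ‖p‖) ^ k * ‖fderiv ℝ (⇑F) p‖ ≤ 2 ^ k * SB := by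
    intro p
    have h := SchwartzMap.one_add_le_sup_seminorm_apply (𝕜 := ℝ) (m := (k, 1)) le_rfl
      le_rfl F p
    have he : ‖fderiv ℝ (⇑F) p‖ = ‖iteratedFDeriv ℝ 1 (⇑F) p‖ := by
      rw [← norm_iteratedFDeriv_fderiv, norm_iteratedFDeriv_zero]
    rw [he]
    exact h
  -- the pointwise decay bound used in part (b)
  have hbound : ∀ (a : H n) (v : ℝ),
      |F (a, v)| ≤ C * (1 / (1 + Hnorm a) ^ (L + 2 * n + 2)) * (1 / (1 + |v|) ^ (L + 1)) := by
    intro a v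
    have hNa : (0:ℝ) ≤ Hnorm a := hnorm_nonneg a
    have hP : (0:ℝ) < (1 + Hnorm a) ^ (L + 2 * n + 2) := by positivity
    have hQ : (0:ℝ) < (1 + |v|) ^ (L + 1) := by positivity
    rw [mul_one_div, mul_one_div, div_div, le_div_iff₀ (by positivity)]
    have hA : 1 + Hnorm a ≤ c * (1 + ‖((a, v) : H n × ℝ)‖) := by
      refine (one_add_hnorm_le a).trans ?_
      have h1 : ‖a‖ ≤ ‖((a, v) : H n × ℝ)‖ := by simpa using norm_fst_le ((a, v) : H n × ℝ)
      nlinarith [norm_nonneg a]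
    have hV : 1 + |v| ≤ 1 + ‖((a, v) : H n × ℝ)‖ := by
      have h2 : |v| ≤ ‖((a, v) : H n × ℝ)‖ := by
        simpa [Real.norm_eq_abs] using norm_snd_le ((a, v) : H n × ℝ)
      linarith
    have hPQ : (1 + Hnorm a) ^ (L + 2 * n + 2) * (1 + |v|) ^ (L + 1)
        ≤ c ^ (L + 2 * n + 2) * (1 + ‖((a, v) : H n × ℝ)‖) ^ (2 * L + 2 * n + 3) := by
      have e1 : (1 + Hnorm a) ^ (L + 2 * n + 2)
          ≤ (c * (1 + ‖((a, v) : H n × ℝ)‖)) ^ (L + 2 * n + 2) :=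
        pow_le_pow_left₀ (by linarith) hA _
      have e2 : (1 + |v|) ^ (L + 1) ≤ (1 + ‖((a, v) : H n × ℝ)‖) ^ (L + 1) :=
        pow_le_pow_left₀ (by positivity) hV _
      calc (1 + Hnorm a) ^ (L + 2 * n + 2) * (1 + |v|) ^ (L + 1)
          ≤ (c * (1 + ‖((a, v) : H n × ℝ)‖)) ^ (L + 2 * n + 2)
              * (1 + ‖((a, v) : H n × ℝ)‖) ^ (L + 1) := by
            exact mul_le_mul e1 e2 (by positivity) (by positivity)
        _ = c ^ (L + 2 * n + 2) * (1 + ‖((a, v) : H n × ℝ)‖) ^ (2 * L + 2 * n + 3) := by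
            rw [mul_pow, mul_assoc, ← pow_add]
            congr 2
            omega
    have h0 := hF0 ((a, v) : H n × ℝ) (2 * L + 2 * n + 3) (by omega)
    have step : |F (a, v)| * ((1 + Hnorm a) ^ (L + 2 * n + 2) * (1 + |v|) ^ (L + 1))
        ≤ c ^ (L + 2 * n + 2) * (2 ^ k * SB) := by
      calc |F (a, v)| * ((1 + Hnorm a) ^ (L + 2 * n + 2) * (1 + |v|) ^ (L + 1))
          ≤ |F (a, v)| * (c ^ (L + 2 * n + 2)
              * (1 + ‖((a, v) : H n × ℝ)‖) ^ (2 * L + 2 * n + 3)) :=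
            mul_le_mul_of_nonneg_left hPQ (abs_nonneg _)
        _ = c ^ (L + 2 * n + 2)
              * ((1 + ‖((a, v) : H n × ℝ)‖) ^ (2 * L + 2 * n + 3) * |F (a, v)|) := by ring
        _ ≤ c ^ (L + 2 * n + 2) * (2 ^ k * SB) :=
            mul_le_mul_of_nonneg_left h0 (by positivity)
    refine step.trans ?_
    have hck : c ^ (L + 2 * n + 2) ≤ g ^ k := by
      calc c ^ (L + 2 * n + 2) ≤ g ^ (L + 2 * n + 2) := by
            apply pow_le_pow_left₀ (le_of_lt hc0)
            nlinarith
        _ ≤ g ^ k := pow_le_pow_right₀ hg1 (by omega)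
    rw [hC_def]
    nlinarith [pow_pos hg0 k, pow_pos (show (0:ℝ) < 2 by norm_num) k,
      mul_le_mul_of_nonneg_right hck (show (0:ℝ) ≤ 2 ^ k * SB by positivity)]
  refine ⟨C, hC0, fun x x' w => ⟨?_, ?_⟩⟩
  · -- part (a)
    intro h
    have hN : (0:ℝ) ≤ Hnorm x := hnorm_nonneg x
    have hN' : (0:ℝ) ≤ Hnorm x' := hnorm_nonneg x'
    have hx'N : Hnorm x' ≤ 1 + Hnorm x := by
      have h2γ : 1 / (2 * γ) ≤ 1 := by
        rw [div_le_one (by linarith)]; linarith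
      nlinarith
    set B : ℝ := C / (3 * (1 + Hnorm x) ^ (L + 2 * n + 3) * (1 + |w|) ^ (L + 2)) with hB_def
    have hseg : ∀ r ∈ segment ℝ ((x, w) : H n × ℝ) ((Hmul x (Hinv x'), w) : H n × ℝ),
        ‖fderiv ℝ (⇑F) r‖ ≤ B := by
      intro r hr
      rw [segment_eq_image'] at hr
      obtain ⟨θ, hθ, rfl⟩ := hr
      obtain ⟨hθ0, hθ1⟩ := hθ
      set r : H n × ℝ := (x, w) + θ • (((Hmul x (Hinv x'), w) : H n × ℝ) - (x, w)) with hr_def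
      have hr2 : r.2 = w := by
        show w + θ • (w - w) = w
        simp
      have hr1 : r.1 = Hmul x (Hinv ((θ • x'.1, θ * x'.2) : H n)) := by
        have e : r.1 = x + θ • (Hmul x (Hinv x') - x) := rfl
        rw [e, segment_pt]
      have haN : Hnorm ((θ • x'.1, θ * x'.2) : H n) ≤ Hnorm x' := hnorm_smul_le x' θ hθ0 hθ1
      have hx_eq : Hmul r.1 ((θ • x'.1, θ * x'.2) : H n) = x := by
        rw [hr1]; exact hmul_hinv_cancel x _
      have hxr : Hnorm x ≤ γ * (Hnorm r.1 + Hnorm ((θ • x'.1, θ * x'.2) : H n)) := by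
        conv_lhs => rw [← hx_eq]
        exact hγ' _ _
      have hkey : 1 + Hnorm x ≤ g * (1 + ‖r‖) := by
        have hh1 : γ * Hnorm ((θ • x'.1, θ * x'.2) : H n) ≤ (1 + Hnorm x) / 2 := by
          have hle := haN.trans h
          calc γ * Hnorm ((θ • x'.1, θ * x'.2) : H n)
              ≤ γ * (1 / (2 * γ) * (1 + Hnorm x)) :=
                mul_le_mul_of_nonneg_left hle (le_of_lt hγ0)
            _ = (1 + Hnorm x) / 2 := by field_simp
        have hh2 : 1 + Hnorm x ≤ 2 + 2 * γ * Hnorm r.1 := by nlinarith [hnorm_nonneg r.1]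
        have hh3 : 1 + Hnorm r.1 ≤ c * (1 + ‖r.1‖) := one_add_hnorm_le r.1
        have hh4 : ‖r.1‖ ≤ ‖r‖ := norm_fst_le r
        have hr10 : (0:ℝ) ≤ Hnorm r.1 := hnorm_nonneg r.1
        have hrn : (0:ℝ) ≤ ‖r‖ := norm_nonneg r
        rw [hg_def]
        nlinarith
      have hw' : 1 + |w| ≤ 1 + ‖r‖ := by
        have : |w| ≤ ‖r‖ := by
          rw [← hr2, ← Real.norm_eq_abs]; exact norm_snd_le r
        linarith
      rw [hB_def, le_div_iff₀ (by positivity)]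
      have hPQ : 3 * (1 + Hnorm x) ^ (L + 2 * n + 3) * (1 + |w|) ^ (L + 2)
          ≤ 3 * g ^ (L + 2 * n + 3) * (1 + ‖r‖) ^ k := by
        have e1 : (1 + Hnorm x) ^ (L + 2 * n + 3) ≤ (g * (1 + ‖r‖)) ^ (L + 2 * n + 3) :=
          pow_le_pow_left₀ (by linarith) hkey _
        have e2 : (1 + |w|) ^ (L + 2) ≤ (1 + ‖r‖) ^ (L + 2) :=
          pow_le_pow_left₀ (by positivity) hw' _
        calc 3 * (1 + Hnorm x) ^ (L + 2 * n + 3) * (1 + |w|) ^ (L + 2)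
            ≤ 3 * (g * (1 + ‖r‖)) ^ (L + 2 * n + 3) * (1 + ‖r‖) ^ (L + 2) := by
              refine mul_le_mul (mul_le_mul_of_nonneg_left e1 (by norm_num)) e2
                (by positivity) (by positivity)
          _ = 3 * g ^ (L + 2 * n + 3)
                * ((1 + ‖r‖) ^ (L + 2 * n + 3) * (1 + ‖r‖) ^ (L + 2)) := by
              rw [mul_pow]; ring
          _ = 3 * g ^ (L + 2 * n + 3) * (1 + ‖r‖) ^ k := by
              rw [← pow_add, hk_def]
              congr 2
              omega
      have hFd := hF1 r
      calc ‖fderiv ℝ (⇑F) r‖ * (3 * (1 + Hnorm x) ^ (L + 2 * n + 3) * (1 + |w|) ^ (L + 2))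
          ≤ ‖fderiv ℝ (⇑F) r‖ * (3 * g ^ (L + 2 * n + 3) * (1 + ‖r‖) ^ k) :=
            mul_le_mul_of_nonneg_left hPQ (norm_nonneg _)
        _ = 3 * g ^ (L + 2 * n + 3) * ((1 + ‖r‖) ^ k * ‖fderiv ℝ (⇑F) r‖) := by ring
        _ ≤ 3 * g ^ (L + 2 * n + 3) * (2 ^ k * SB) :=
            mul_le_mul_of_nonneg_left hFd (by positivity)
        _ ≤ C := by
            rw [hC_def]
            have hgm : g ^ (L + 2 * n + 3) ≤ g ^ k := pow_le_pow_right₀ hg1 (by omega)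
            nlinarith [pow_pos hg0 k, pow_pos (show (0:ℝ) < 2 by norm_num) k,
              mul_le_mul_of_nonneg_right hgm
                (show (0:ℝ) ≤ 2 ^ k * SB by positivity)]
    have hmvt := Convex.norm_image_sub_le_of_norm_fderiv_le
      (f := ⇑F) (s := segment ℝ ((x, w) : H n × ℝ) ((Hmul x (Hinv x'), w) : H n × ℝ))
      (fun r _ => F.differentiable.differentiableAt) hseg (convex_segment _ _)
      (left_mem_segment ℝ _ _) (right_mem_segment ℝ _ _)
    have hpq : ‖((Hmul x (Hinv x'), w) : H n × ℝ) - (x, w)‖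
        ≤ 3 * Hnorm x' * (1 + Hnorm x) := by
      have e : ((Hmul x (Hinv x'), w) : H n × ℝ) - (x, w) = (Hmul x (Hinv x') - x, 0) := by
        ext1 <;> simp
      rw [e, Prod.norm_def]
      have : ‖((Hmul x (Hinv x') - x, (0:ℝ)) : H n × ℝ).2‖ = 0 := norm_zero
      rw [this, max_eq_left (norm_nonneg _)]
      exact norm_diff_le x x' hx'N
    have hstep : |F (Hmul x (Hinv x'), w) - F (x, w)|
        ≤ B * (3 * Hnorm x' * (1 + Hnorm x)) := by
      rw [← Real.norm_eq_abs]
      exact hmvt.trans (mul_le_mul_of_nonneg_left hpq (by positivity))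
    refine hstep.trans ?_
    rw [mul_one_div, div_div, hB_def]
    have hexp : L + 2 * n + 3 = (L + 2 * n + 2) + 1 := by omega
    rw [hexp, pow_succ]
    rw [div_mul_eq_mul_div, div_le_div_iff₀ (by positivity) (by positivity)]
    set P : ℝ := (1 + Hnorm x) ^ (L + 2 * n + 2) with hP_def
    set Q : ℝ := (1 + |w|) ^ (L + 2) with hQ_def
    apply le_of_eq
    ring

  · -- part (b)
    have h1 := hbound (Hmul x (Hinv x')) w
    have h2 := hbound x w
    have habs : |F (Hmul x (Hinv x'), w) - F (x, w)|
        ≤ |F (Hmul x (Hinv x'), w)| + |F (x, w)| := abs_sub _ _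
    have heq : C * (1 / (1 + Hnorm (Hmul x (Hinv x'))) ^ (L + 2 * n + 2)
          + 1 / (1 + Hnorm x) ^ (L + 2 * n + 2)) * (1 / (1 + |w|) ^ (L + 1))
        = C * (1 / (1 + Hnorm (Hmul x (Hinv x'))) ^ (L + 2 * n + 2))
            * (1 / (1 + |w|) ^ (L + 1))
          + C * (1 / (1 + Hnorm x) ^ (L + 2 * n + 2)) * (1 / (1 + |w|) ^ (L + 1)) := by
      ring
    rw [heq]
    linarith
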